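/- Let P, Q, R, S be a pqrs-quad and let F : ℂ → ℂ be an entire function satisfying the special double confluent Heun equation ℋ[F] = 0, i.e. F″(w) + (ℓ + μ(e^{−w} − e^{w}))·F′(w) + (λ − (ℓ+1)μ·e^w)·F(w) = 0 for all w ∈ ℂ. Then the function L_B[F], defined by L_B[F](w) = e^{(1−ℓ)w}·e^{μ(e^w + e^{−w})}·(S(w+iπ)·F(w+iπ) − e^{w}·R(w+iπ)·F′(w+iπ)), also satisfies ℋ[L_B[F]] = 0 on all of ℂ. -/

import Mathlib

noncomputable def ipi : ℂ := (Real.pi : ℂ) * Complex.I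

noncomputable def heunOp (ell lam mu : ℂ) (F : ℂ → ℂ) : ℂ → ℂ := fun w =>
  deriv (deriv F) w + (ell + mu * (Complex.exp (-w) - Complex.exp w)) * deriv F w +
    (lam - (ell + 1) * mu * Complex.exp w) * F w

noncomputable def opLB (ell mu : ℂ) (R S : ℂ → ℂ) (F : ℂ → ℂ) : ℂ → ℂ := fun w =>
  Complex.exp ((1 - ell) * w) * Complex.exp (mu * (Complex.exp w + Complex.exp (-w))) *
    (S (w + ipi) * F (w + ipi) - Complex.exp w * R (w + ipi) * deriv F (w + ipi))

lemma eipi : Complex.exp ipi = -1 := by rw [ipi, Complex.exp_pi_mul_I]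

lemma eshift (x : ℂ) : Complex.exp (x + ipi) = -Complex.exp x := by
  rw [Complex.exp_add, eipi]; ring

lemma emshift (x : ℂ) : Complex.exp (-(x + ipi)) = -Complex.exp (-x) := by
  rw [show -(x + ipi) = -x + -ipi by ring, Complex.exp_add,
    show Complex.exp (-ipi) = -1 by rw [Complex.exp_neg, eipi]; norm_num]
  ring

lemma e2shift (x : ℂ) : Complex.exp (2 * (x + ipi)) = Complex.exp x * Complex.exp x := by
  rw [show (2:ℂ) * (x + ipi) = (x + ipi) + (x + ipi) by ring, Complex.exp_add, eshift]; ring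

lemma heun_of (ell lam mu : ℂ) (F G1 : ℂ → ℂ) (hd : ∀ x, HasDerivAt F (G1 x) x)
    (w : ℂ) (V : ℂ) (hd2 : HasDerivAt G1 V w) :
    heunOp ell lam mu F w =
      V + (ell + mu * (Complex.exp (-w) - Complex.exp w)) * G1 w +
        (lam - (ell + 1) * mu * Complex.exp w) * F w := by
  unfold heunOp
  rw [show deriv F = G1 from funext fun x => (hd x).deriv, hd2.deriv]

noncomputable def dPa (ell lam mu : ℂ) (P Q R : ℂ → ℂ) : ℂ → ℂ := fun y =>
  -Complex.exp (-y) * ((mu - (ell - 1) * Complex.exp y) * P (y + ipi) - Q (y + ipi)) -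
    Complex.exp y * R (y + ipi)

noncomputable def dQa (ell lam mu : ℂ) (P Q S : ℂ → ℂ) : ℂ → ℂ := fun y =>
  -Complex.exp y * ((lam + (ell + 1) * mu * Complex.exp y) * P (y + ipi) + mu * Q (y + ipi)
    + S (y + ipi))

noncomputable def dRa (ell lam mu : ℂ) (P R S : ℂ → ℂ) : ℂ → ℂ := fun y =>
  Complex.exp (-y) * ((lam + mu ^ 2) * P (y + ipi) + S (y + ipi)) +
    (2 * (ell - 1) + mu * Complex.exp y) * R (y + ipi)

noncomputable def dSa (ell lam mu : ℂ) (Q R S : ℂ → ℂ) : ℂ → ℂ := fun y =>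
  Complex.exp (-y) * ((lam + mu ^ 2) * Q (y + ipi) + ((ell - 1) * Complex.exp y + mu) * S (y + ipi))
    - Complex.exp y * ((lam + (ell + 1) * mu * Complex.exp y) * R (y + ipi))

noncomputable def dGa (ell lam mu : ℂ) (F : ℂ → ℂ) : ℂ → ℂ := fun y =>
  -(ell + mu * (Complex.exp y - Complex.exp (-y))) * deriv F (y + ipi) -
    (lam + (ell + 1) * mu * Complex.exp y) * F (y + ipi)

noncomputable def auxA (ell mu : ℂ) : ℂ → ℂ := fun y =>
  Complex.exp ((1 - ell) * y) * Complex.exp (mu * (Complex.exp y + Complex.exp (-y)))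

noncomputable def auxC (ell mu : ℂ) : ℂ → ℂ := fun y =>
  (1 - ell) + mu * (Complex.exp y - Complex.exp (-y))

noncomputable def auxK (R S F : ℂ → ℂ) : ℂ → ℂ := fun y =>
  S (y + ipi) * F (y + ipi) - Complex.exp y * R (y + ipi) * deriv F (y + ipi)

noncomputable def auxK1 (ell lam mu : ℂ) (P Q R S F : ℂ → ℂ) : ℂ → ℂ := fun y =>
  (dSa ell lam mu Q R S y * F (y + ipi) + S (y + ipi) * deriv F (y + ipi)) -
    ((Complex.exp y * R (y + ipi) + Complex.exp y * dRa ell lam mu P R S y) * deriv F (y + ipi) +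
      Complex.exp y * R (y + ipi) * dGa ell lam mu F y)

set_option maxHeartbeats 2000000 in
theorem statement_9 (ell lam mu : ℂ) (P Q R S : ℂ → ℂ)
    (hP : Differentiable ℂ P) (hQ : Differentiable ℂ Q)
    (hR : Differentiable ℂ R) (hS : Differentiable ℂ S)
    (hsys1 : ∀ w : ℂ, Complex.exp w * deriv P w =
      (mu + (ell - 1) * Complex.exp w) * P w - Q w + Complex.exp (2 * w) * R w)
    (hsys2 : ∀ w : ℂ, deriv Q w =
      Complex.exp w * ((lam - (ell + 1) * mu * Complex.exp w) * P w + mu * Q w + S w))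
    (hsys3 : ∀ w : ℂ, Complex.exp w * deriv R w =
      -(lam + mu ^ 2) * P w + Complex.exp w * (2 * (ell - 1) - mu * Complex.exp w) * R w - S w)
    (hsys4 : ∀ w : ℂ, Complex.exp w * deriv S w =
      -(lam + mu ^ 2) * Q w + Complex.exp (2 * w) * (lam - (ell + 1) * mu * Complex.exp w) * R w
        + ((ell - 1) * Complex.exp w - mu) * S w)
    (F : ℂ → ℂ) (hF : Differentiable ℂ F) (hF' : Differentiable ℂ (deriv F))
    (hHeun : ∀ w : ℂ, heunOp ell lam mu F w = 0) :
    ∀ w : ℂ, heunOp ell lam mu (opLB ell mu R S F) w = 0 := by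
  have hEm : ∀ x : ℂ, HasDerivAt (fun y : ℂ => Complex.exp (-y)) (-Complex.exp (-x)) x := by
    intro x
    have := ((hasDerivAt_id x).neg).cexp
    simpa using this
  -- atom derivative lemmas
  have hvP : ∀ x : ℂ, HasDerivAt (fun y => P (y + ipi)) (dPa ell lam mu P Q R x) x := by
    intro x
    have h0 : HasDerivAt (fun y : ℂ => P (y + ipi)) (deriv P (x + ipi) * 1) x :=
      HasDerivAt.comp x (hP (x + ipi)).hasDerivAt ((hasDerivAt_id x).add_const ipi)
    have e : deriv P (x + ipi) = dPa ell lam mu P Q R x := by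
      have key := hsys1 (x + ipi)
      rw [eshift, e2shift] at key
      simp only [dPa]
      rw [Complex.exp_neg]
      field_simp
      linear_combination -key
    rw [mul_one, e] at h0
    exact h0
  have hvQ : ∀ x : ℂ, HasDerivAt (fun y => Q (y + ipi)) (dQa ell lam mu P Q S x) x := by
    intro x
    have h0 : HasDerivAt (fun y : ℂ => Q (y + ipi)) (deriv Q (x + ipi) * 1) x :=
      HasDerivAt.comp x (hQ (x + ipi)).hasDerivAt ((hasDerivAt_id x).add_const ipi)
    have e : deriv Q (x + ipi) = dQa ell lam mu P Q S x := by
      have key := hsys2 (x + ipi)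
      rw [eshift] at key
      simp only [dQa]
      linear_combination key
    rw [mul_one, e] at h0
    exact h0
  have hvR : ∀ x : ℂ, HasDerivAt (fun y => R (y + ipi)) (dRa ell lam mu P R S x) x := by
    intro x
    have h0 : HasDerivAt (fun y : ℂ => R (y + ipi)) (deriv R (x + ipi) * 1) x :=
      HasDerivAt.comp x (hR (x + ipi)).hasDerivAt ((hasDerivAt_id x).add_const ipi)
    have e : deriv R (x + ipi) = dRa ell lam mu P R S x := by
      have key := hsys3 (x + ipi)
      rw [eshift] at key
      simp only [dRa]
      rw [Complex.exp_neg]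
      field_simp
      linear_combination -key
    rw [mul_one, e] at h0
    exact h0
  have hvS : ∀ x : ℂ, HasDerivAt (fun y => S (y + ipi)) (dSa ell lam mu Q R S x) x := by
    intro x
    have h0 : HasDerivAt (fun y : ℂ => S (y + ipi)) (deriv S (x + ipi) * 1) x :=
      HasDerivAt.comp x (hS (x + ipi)).hasDerivAt ((hasDerivAt_id x).add_const ipi)
    have e : deriv S (x + ipi) = dSa ell lam mu Q R S x := by
      have key := hsys4 (x + ipi)
      rw [eshift, e2shift] at key
      simp only [dSa]
      rw [Complex.exp_neg]
      field_simp
      linear_combination -key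
    rw [mul_one, e] at h0
    exact h0
  have hvF : ∀ x : ℂ, HasDerivAt (fun y => F (y + ipi)) (deriv F (x + ipi)) x := by
    intro x
    have h0 : HasDerivAt (fun y : ℂ => F (y + ipi)) (deriv F (x + ipi) * 1) x :=
      HasDerivAt.comp x (hF (x + ipi)).hasDerivAt ((hasDerivAt_id x).add_const ipi)
    rwa [mul_one] at h0
  have hvG : ∀ x : ℂ, HasDerivAt (fun y => deriv F (y + ipi)) (dGa ell lam mu F x) x := by
    intro x
    have h0 : HasDerivAt (fun y : ℂ => deriv F (y + ipi)) (deriv (deriv F) (x + ipi) * 1) x :=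
      HasDerivAt.comp (h₂ := deriv F) x (hF' (x + ipi)).hasDerivAt ((hasDerivAt_id x).add_const ipi)
    have e : deriv (deriv F) (x + ipi) = dGa ell lam mu F x := by
      have key := hHeun (x + ipi)
      unfold heunOp at key
      rw [eshift, emshift] at key
      simp only [dGa]
      linear_combination key
    rw [mul_one, e] at h0
    exact h0
  -- the exponential prefactor
  have hA : ∀ x : ℂ, HasDerivAt (auxA ell mu) (auxC ell mu x * auxA ell mu x) x := by
    intro x
    have h1 : HasDerivAt (fun y : ℂ => Complex.exp ((1 - ell) * y))
        ((1 - ell) * Complex.exp ((1 - ell) * x)) x := by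
      have := ((hasDerivAt_id x).const_mul (1 - ell)).cexp
      simpa [mul_comm] using this
    have h2 := (((Complex.hasDerivAt_exp x).add (hEm x)).const_mul mu).cexp
    refine (h1.mul h2).congr_deriv ?_
    simp only [auxA, auxC, Pi.add_apply]
    ring
  have hK1 : ∀ x : ℂ, HasDerivAt (auxK R S F) (auxK1 ell lam mu P Q R S F x) x := by
    intro x
    exact ((hvS x).mul (hvF x)).sub (((Complex.hasDerivAt_exp x).mul (hvR x)).mul (hvG x))
  have hG1 : ∀ x : ℂ, HasDerivAt (opLB ell mu R S F)
      (auxC ell mu x * auxA ell mu x * auxK R S F x +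
        auxA ell mu x * auxK1 ell lam mu P Q R S F x) x := by
    intro x
    exact (hA x).mul (hK1 x)
  intro w
  -- second-derivative building blocks at w
  have hE := Complex.hasDerivAt_exp w
  have hdRa := ((hEm w).mul (((hvP w).const_mul (lam + mu ^ 2)).add (hvS w))).add
    ((((Complex.hasDerivAt_exp w).const_mul mu).const_add (2 * (ell - 1))).mul (hvR w))
  have hdSa := ((hEm w).mul (((hvQ w).const_mul (lam + mu ^ 2)).add
      (((((Complex.hasDerivAt_exp w).const_mul (ell - 1)).add_const mu)).mul (hvS w)))).sub
    ((Complex.hasDerivAt_exp w).mul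
      ((((Complex.hasDerivAt_exp w).const_mul ((ell + 1) * mu)).const_add lam).mul (hvR w)))
  have hdGa := (((((Complex.hasDerivAt_exp w).sub (hEm w)).const_mul mu).const_add ell).neg.mul
      (hvG w)).sub
    ((((Complex.hasDerivAt_exp w).const_mul ((ell + 1) * mu)).const_add lam).mul (hvF w))
  have hK2 : HasDerivAt (auxK1 ell lam mu P Q R S F) _ w :=
    ((hdSa.mul (hvF w)).add ((hvS w).mul (hvG w))).sub
      (((((Complex.hasDerivAt_exp w).mul (hvR w)).add
          ((Complex.hasDerivAt_exp w).mul hdRa)).mul (hvG w)).add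
        (((Complex.hasDerivAt_exp w).mul (hvR w)).mul hdGa))
  have hcw : HasDerivAt (auxC ell mu) _ w :=
    (((Complex.hasDerivAt_exp w).sub (hEm w)).const_mul mu).const_add (1 - ell)
  have hV : HasDerivAt (fun x => auxC ell mu x * auxA ell mu x * auxK R S F x +
      auxA ell mu x * auxK1 ell lam mu P Q R S F x) _ w :=
    ((hcw.mul (hA w)).mul (hK1 w)).add ((hA w).mul hK2)
  have key := heun_of ell lam mu (opLB ell mu R S F)
    (fun x => auxC ell mu x * auxA ell mu x * auxK R S F x +
      auxA ell mu x * auxK1 ell lam mu P Q R S F x) hG1 w _ hV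
  rw [key]
  simp only [opLB, auxK1, auxK, auxA, auxC, dPa, dQa, dRa, dSa, dGa, id_eq, Pi.add_apply,
    Pi.mul_apply, Pi.sub_apply, Pi.neg_apply]
  have hrel : Complex.exp w * Complex.exp (-w) = 1 := by
    rw [← Complex.exp_add]; simp
  linear_combination
    ((Complex.exp ((1 - ell) * w) * Complex.exp (mu * (Complex.exp w + Complex.exp (-w)))) *
    ((-2 : ℂ) * (S (w + ipi)) * (deriv F (w + ipi)) +
      (-1 : ℂ) * (S (w + ipi)) * (F (w + ipi)) +
      (1 : ℂ) * (Complex.exp w) * (Complex.exp (-w)) * (S (w + ipi)) * (deriv F (w + ipi)) +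
      (1 : ℂ) * (Complex.exp w) * (Complex.exp (-w)) * (S (w + ipi)) * (F (w + ipi)) +
      (-2 : ℂ) * mu * (Complex.exp (-w)) * (S (w + ipi)) * (deriv F (w + ipi)) +
      (-1 : ℂ) * mu * (Complex.exp (-w)) * (S (w + ipi)) * (F (w + ipi)) +
      (1 : ℂ) * mu * (Complex.exp w) ^ 2 * (R (w + ipi)) * (deriv F (w + ipi)) +
      (1 : ℂ) * mu * (Complex.exp w) ^ 2 * (R (w + ipi)) * (F (w + ipi)) +
      (-2 : ℂ) * mu ^ 2 * (Complex.exp (-w)) * (Q (w + ipi)) * (deriv F (w + ipi)) +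
      (-1 : ℂ) * mu ^ 2 * (Complex.exp (-w)) * (Q (w + ipi)) * (F (w + ipi)) +
      (1 : ℂ) * mu ^ 2 * (Complex.exp w) * (Complex.exp (-w)) * (P (w + ipi)) * (deriv F (w + ipi)) +
      (-2 : ℂ) * lam * (Complex.exp (-w)) * (Q (w + ipi)) * (deriv F (w + ipi)) +
      (-1 : ℂ) * lam * (Complex.exp (-w)) * (Q (w + ipi)) * (F (w + ipi)) +
      (2 : ℂ) * lam * (Complex.exp w) * (R (w + ipi)) * (deriv F (w + ipi)) +
      (1 : ℂ) * lam * (Complex.exp w) * (R (w + ipi)) * (F (w + ipi)) +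
      (1 : ℂ) * lam * (Complex.exp w) * (Complex.exp (-w)) * (P (w + ipi)) * (deriv F (w + ipi)) +
      (2 : ℂ) * ell * (S (w + ipi)) * (deriv F (w + ipi)) +
      (1 : ℂ) * ell * (S (w + ipi)) * (F (w + ipi)) +
      (-1 : ℂ) * ell * (Complex.exp w) * (Complex.exp (-w)) * (S (w + ipi)) * (deriv F (w + ipi)) +
      (-2 : ℂ) * ell * (Complex.exp w) * (Complex.exp (-w)) * (S (w + ipi)) * (F (w + ipi)) +
      (1 : ℂ) * ell * mu * (Complex.exp (-w)) * (S (w + ipi)) * (F (w + ipi)) +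
      (2 : ℂ) * ell * mu * (Complex.exp w) * (S (w + ipi)) * (F (w + ipi)) +
      (1 : ℂ) * ell * mu * (Complex.exp w) ^ 2 * (R (w + ipi)) * (deriv F (w + ipi)) +
      (1 : ℂ) * ell * mu ^ 2 * (Complex.exp (-w)) * (Q (w + ipi)) * (F (w + ipi)) +
      (-1 : ℂ) * ell * mu ^ 2 * (Complex.exp w) * (Complex.exp (-w)) * (P (w + ipi)) * (deriv F (w + ipi)) +
      (1 : ℂ) * ell * lam * (Complex.exp (-w)) * (Q (w + ipi)) * (F (w + ipi)) +
      (-1 : ℂ) * ell * lam * (Complex.exp w) * (R (w + ipi)) * (F (w + ipi)) +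
      (-1 : ℂ) * ell * lam * (Complex.exp w) * (Complex.exp (-w)) * (P (w + ipi)) * (deriv F (w + ipi)) +
      (1 : ℂ) * ell ^ 2 * (Complex.exp w) * (Complex.exp (-w)) * (S (w + ipi)) * (F (w + ipi)) +
      (-1 : ℂ) * ell ^ 2 * mu * (Complex.exp w) ^ 2 * (R (w + ipi)) * (F (w + ipi)))) * hrel
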